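/- Let P be a finite poset with gap(P) = c(P) + |P| - (max(P) + min(P) + edges(P)). Then gap(P) ≥ 0, and gap(P) = 0 if and only if P contains no five distinct elements a,b,c,d,e with a,b < c < d,e (a ∥ b, d ∥ e). -/

import Mathlib

open Classical

variable {α : Type*}

/-- A saturated chain from `v` up to a maximal element: a list `v = v₀ ⋖ v₁ ⋖ … ⋖ vₖ`
with `vₖ` maximal. -/
def UpChain [PartialOrder α] (v : α) (l : List α) : Prop :=
  l.Chain' (· ⋖ ·) ∧ l.head? = some v ∧ ∃ m, l.getLast? = some m ∧ IsMax m

/-- A saturated chain from a minimal element up to `v`. -/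
def DownChain [PartialOrder α] (v : α) (l : List α) : Prop :=
  l.Chain' (· ⋖ ·) ∧ (∃ m, l.head? = some m ∧ IsMin m) ∧ l.getLast? = some v

/-- `uc v` : the number of saturated chains from `v` up to a maximal element. -/
noncomputable def uc [PartialOrder α] (v : α) : ℕ := Nat.card {l : List α // UpChain v l}

/-- `dc v` : the number of saturated chains from `v` down to a minimal element. -/
noncomputable def dc [PartialOrder α] (v : α) : ℕ := Nat.card {l : List α // DownChain v l}

/-- A maximal chain: a saturated chain from a minimal element to a maximal element. -/
def IsMaxChainList [PartialOrder α] (l : List α) : Prop :=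
  l.Chain' (· ⋖ ·) ∧ (∃ m, l.head? = some m ∧ IsMin m) ∧ ∃ m, l.getLast? = some m ∧ IsMax m

/-- `c(P)`: the number of maximal chains. -/
noncomputable def numMaxChains (α : Type*) [PartialOrder α] : ℕ :=
  Nat.card {l : List α // IsMaxChainList l}

/-- `max(P)`: the number of maximal elements. -/
noncomputable def numMax (α : Type*) [PartialOrder α] : ℕ := Nat.card {v : α // IsMax v}

/-- `min(P)`: the number of minimal elements. -/
noncomputable def numMin (α : Type*) [PartialOrder α] : ℕ := Nat.card {v : α // IsMin v}

/-- `edges(P)`: the number of cover relations (edges of the Hasse diagram). -/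
noncomputable def numEdges (α : Type*) [PartialOrder α] : ℕ :=
  Nat.card {p : α × α // p.1 ⋖ p.2}

/-- `gap(P) = c(P) + |P| - (max(P) + min(P) + edges(P))`. -/
noncomputable def gap (α : Type*) [PartialOrder α] : ℤ :=
  (numMaxChains α : ℤ) + Nat.card α - ((numMax α : ℤ) + numMin α + numEdges α)

/-- The crossing number `(uc(v)-1)(dc(v)-1)` of `v`. -/
noncomputable def crossingNumber [PartialOrder α] (v : α) : ℕ := (uc v - 1) * (dc v - 1)

/-- `c` is the center of an X-shaped subposet: there are `a, b < c < d, e`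
with `a ∥ b` and `d ∥ e`. -/
def IsXCenter [PartialOrder α] (c : α) : Prop :=
  ∃ a b d e : α, a < c ∧ b < c ∧ c < d ∧ c < e ∧
    ¬ a ≤ b ∧ ¬ b ≤ a ∧ ¬ d ≤ e ∧ ¬ e ≤ d

/-- `P` contains an X-shaped subposet. -/
def HasX (α : Type*) [PartialOrder α] : Prop := ∃ c : α, IsXCenter c


/-! ### Auxiliary development -/

section GapAux

set_option linter.unusedSectionVars false

variable {α : Type*} [Fintype α] [PartialOrder α]

/-- number of lower covers of `w`. -/
noncomputable def indeg (w : α) : ℕ := Nat.card {u : α // u ⋖ w}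

lemma pairwise_of_chain' {l : List α} (h : l.Chain' (· ⋖ ·)) : l.Pairwise (· < ·) :=
  List.isChain_iff_pairwise.mp (h.imp (fun _ _ hc => hc.lt))

lemma finite_chain' : Finite {l : List α // l.Chain' (· ⋖ ·)} := by
  have hsub : {l : List α | l.Chain' (· ⋖ ·)} ⊆ {l : List α | l.length ≤ Fintype.card α} := by
    intro l hl
    exact List.Nodup.length_le_card ((pairwise_of_chain' hl).imp (fun hc => ne_of_lt hc))
  exact ((List.finite_length_le α (Fintype.card α)).subset hsub).to_subtype

lemma finite_upChain (v : α) : Finite {l : List α // UpChain v l} := by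
  have := finite_chain' (α := α)
  refine Finite.of_injective (fun l => (⟨l.1, l.2.1⟩ : {l : List α // l.Chain' (· ⋖ ·)})) ?_
  intro a b h
  exact Subtype.ext (by simpa using congrArg Subtype.val h)

lemma finite_maxChain : Finite {l : List α // IsMaxChainList l} := by
  have := finite_chain' (α := α)
  refine Finite.of_injective (fun l => (⟨l.1, l.2.1⟩ : {l : List α // l.Chain' (· ⋖ ·)})) ?_
  intro a b h
  exact Subtype.ext (by simpa using congrArg Subtype.val h)

/-- A saturated path from `a` to `b`. -/
def SatPath (a b : α) (l : List α) : Prop :=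
  l.Chain' (· ⋖ ·) ∧ l.head? = some a ∧ l.getLast? = some b

lemma exists_satPath : ∀ a b : α, a ≤ b → ∃ l, SatPath a b l := by
  have hwf : WellFounded ((· > ·) : α → α → Prop) := IsWellFounded.wf
  intro a
  induction a using hwf.induction with
  | _ a IH =>
    intro b hab
    rcases eq_or_lt_of_le hab with rfl | hlt
    · exact ⟨[a], List.isChain_singleton a, rfl, rfl⟩
    · obtain ⟨x, hax, hxb⟩ := exists_covBy_le_of_lt hlt
      obtain ⟨l, hl, hh, hlast⟩ := IH x hax.lt b hxb
      cases l with
      | nil => simp at hh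
      | cons y t =>
        have hy : y = x := by simpa using hh
        subst hy
        exact ⟨a :: y :: t, List.isChain_cons_cons.mpr ⟨hax, hl⟩, rfl, by
          rw [List.getLast?_cons_cons]; exact hlast⟩

lemma exists_upChain (v : α) : ∃ l, UpChain v l := by
  have hwf : WellFounded ((· > ·) : α → α → Prop) := IsWellFounded.wf
  induction v using hwf.induction with
  | _ v IH =>
    by_cases hv : IsMax v
    · exact ⟨[v], List.isChain_singleton v, rfl, v, rfl, hv⟩
    · obtain ⟨w, hvw⟩ := exists_covBy_of_wellFoundedLT hv
      obtain ⟨l, hl, hh, m, hlast, hm⟩ := IH w hvw.lt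
      cases l with
      | nil => simp at hh
      | cons y t =>
        have hy : y = w := by simpa using hh
        subst hy
        exact ⟨v :: y :: t, List.isChain_cons_cons.mpr ⟨hvw, hl⟩, rfl, m, by
          rw [List.getLast?_cons_cons]; exact hlast, hm⟩

lemma exists_upChain_mem {c d : α} (h : c ≤ d) : ∃ l, UpChain c l ∧ d ∈ l := by
  obtain ⟨p, hp, hph, hpl⟩ := exists_satPath c d h
  obtain ⟨u, hu, huh, m, hul, hm⟩ := exists_upChain d
  cases u with
  | nil => simp at huh
  | cons y t =>
    have hy : y = d := by simpa using huh
    rw [hy] at hu hul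
    have hpne : p ≠ [] := by rintro rfl; simp at hph
    have hdp : d ∈ p := by
      obtain ⟨hne, heq⟩ := List.mem_getLast?_eq_getLast hpl
      rw [heq]; exact List.getLast_mem hne
    refine ⟨p ++ t, ⟨?_, ?_, ?_⟩, List.mem_append_left t hdp⟩
    · refine List.IsChain.append hp (List.isChain_cons.mp hu).2 ?_
      intro x hx z hz
      have hx' : x = d := by rw [hpl] at hx; exact (by simpa using hx : d = x).symm
      subst hx'
      exact (List.isChain_cons.mp hu).1 z hz
    · rw [List.head?_append_of_ne_nil _ hpne]; exact hph
    · cases t with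
      | nil =>
        have hmd : m = d := (by simpa using hul : d = m).symm
        subst hmd
        exact ⟨m, by simpa using hpl, hm⟩
      | cons z s =>
        refine ⟨m, ?_, hm⟩
        rw [List.getLast?_append_of_ne_nil _ (by simp)]
        rw [List.getLast?_cons_cons] at hul
        exact hul


lemma two_le_uc {c d e : α} (hd : c ≤ d) (he : c ≤ e) (hde : ¬ d ≤ e) (hed : ¬ e ≤ d) :
    2 ≤ uc c := by
  obtain ⟨l₁, h₁, hd1⟩ := exists_upChain_mem hd
  obtain ⟨l₂, h₂, he2⟩ := exists_upChain_mem he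
  have hne : l₁ ≠ l₂ := by
    rintro rfl
    have hp : l₁.Pairwise (fun a b => a < b ∨ b < a) :=
      (pairwise_of_chain' h₁.1).imp (fun h => Or.inl h)
    have hsym : Symmetric (fun a b : α => a < b ∨ b < a) := fun a b h => h.symm
    have := (haveI : Std.Symm (fun a b : α => a < b ∨ b < a) := ⟨fun a b h => h.symm⟩
      hp.forall hd1 he2 (fun h => hde (le_of_eq h)))
    rcases this with h | h
    · exact hde h.le
    · exact hed h.le
  have : Finite {l : List α // UpChain c l} := finite_upChain c
  have hnt : Nontrivial {l : List α // UpChain c l} :=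
    ⟨⟨⟨l₁, h₁⟩, ⟨l₂, h₂⟩, by simpa using hne⟩⟩
  haveI := Fintype.ofFinite {l : List α // UpChain c l}
  rw [uc, Nat.card_eq_fintype_card]
  exact Fintype.one_lt_card_iff_nontrivial.mpr hnt

lemma upchain_diverge : ∀ (l₁ : List α) (v : α) (l₂ : List α), UpChain v l₁ → UpChain v l₂ →
    l₁ ≠ l₂ → ∃ z d e, v ≤ z ∧ z ⋖ d ∧ z ⋖ e ∧ d ≠ e := by
  intro l₁
  induction l₁ with
  | nil => intro v l₂ h₁; exact absurd h₁.2.1 (by simp)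
  | cons x t ih =>
    intro v l₂ h₁ h₂ hne
    have hx : x = v := by simpa using h₁.2.1
    subst hx
    cases l₂ with
    | nil => exact absurd h₂.2.1 (by simp)
    | cons y t₂ =>
      have hy : y = x := by simpa using h₂.2.1
      subst hy
      cases t with
      | nil =>
        obtain ⟨m, hm, hmax⟩ := h₁.2.2
        have hmx : m = y := (by simpa using hm : y = m).symm
        cases t₂ with
        | nil => exact absurd rfl hne
        | cons w s =>
          have hcov : y ⋖ w := (List.isChain_cons.mp h₂.1).1 w rfl
          exact absurd ((hmx ▸ hmax : IsMax y) hcov.lt.le) (not_le_of_gt hcov.lt)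
      | cons w₁ s₁ =>
        cases t₂ with
        | nil =>
          obtain ⟨m, hm, hmax⟩ := h₂.2.2
          have hmx : m = y := (by simpa using hm : y = m).symm
          have hcov : y ⋖ w₁ := (List.isChain_cons.mp h₁.1).1 w₁ rfl
          exact absurd ((hmx ▸ hmax : IsMax y) hcov.lt.le) (not_le_of_gt hcov.lt)
        | cons w₂ s₂ =>
          have hc₁ : y ⋖ w₁ := (List.isChain_cons.mp h₁.1).1 w₁ rfl
          have hc₂ : y ⋖ w₂ := (List.isChain_cons.mp h₂.1).1 w₂ rfl
          by_cases hw : w₁ = w₂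
          · subst hw
            have ht : (w₁ :: s₁) ≠ (w₁ :: s₂) := by
              intro h; exact hne (by rw [h])
            have hu₁ : UpChain w₁ (w₁ :: s₁) := by
              refine ⟨(List.isChain_cons.mp h₁.1).2, rfl, ?_⟩
              obtain ⟨m, hm, hmax⟩ := h₁.2.2
              rw [List.getLast?_cons_cons] at hm
              exact ⟨m, hm, hmax⟩
            have hu₂ : UpChain w₁ (w₁ :: s₂) := by
              refine ⟨(List.isChain_cons.mp h₂.1).2, rfl, ?_⟩
              obtain ⟨m, hm, hmax⟩ := h₂.2.2
              rw [List.getLast?_cons_cons] at hm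
              exact ⟨m, hm, hmax⟩
            obtain ⟨z, d, e, hz, hzd, hze, hde⟩ := ih w₁ (w₁ :: s₂) hu₁ hu₂ ht
            exact ⟨z, d, e, le_trans hc₁.lt.le hz, hzd, hze, hde⟩
          · exact ⟨y, w₁, w₂, le_refl y, hc₁, hc₂, hw⟩

lemma diverge {v : α} (h : 2 ≤ uc v) :
    ∃ d e, v < d ∧ v < e ∧ ¬ d ≤ e ∧ ¬ e ≤ d := by
  haveI := finite_upChain v
  haveI := Fintype.ofFinite {l : List α // UpChain v l}
  rw [uc, Nat.card_eq_fintype_card] at h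
  have hnt : Nontrivial {l : List α // UpChain v l} :=
    Fintype.one_lt_card_iff_nontrivial.mp h
  obtain ⟨⟨l₁, h₁⟩, ⟨l₂, h₂⟩, hne⟩ := hnt
  have hne' : l₁ ≠ l₂ := fun h => hne (Subtype.ext h)
  obtain ⟨z, d, e, hz, hzd, hze, hde⟩ := upchain_diverge l₁ v l₂ h₁ h₂ hne'
  refine ⟨d, e, lt_of_le_of_lt hz hzd.lt, lt_of_le_of_lt hz hze.lt, ?_, ?_⟩
  · intro hle
    exact hze.2 hzd.lt (lt_of_le_of_ne hle hde)
  · intro hle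
    exact hzd.2 hze.lt (lt_of_le_of_ne hle (Ne.symm hde))

lemma nat_card_sigma {ι : Type*} [Fintype ι] (F : ι → Type*) [∀ i, Finite (F i)] :
    Nat.card (Σ i, F i) = ∑ i, Nat.card (F i) := by
  letI : ∀ i, Fintype (F i) := fun i => Fintype.ofFinite _
  simp [Nat.card_eq_fintype_card]

lemma sum_subtype_ite {p : α → Prop} (f : α → ℕ) :
    ∑ w : {w : α // p w}, f w.1 = ∑ w : α, if p w then f w else 0 := by
  rw [← Finset.subtype_univ, Finset.sum_subtype_eq_sum_filter, Finset.sum_filter]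

lemma uc_max {u : α} (hu : IsMax u) : uc u = 1 := by
  have huniq : ∀ l, UpChain u l ↔ l = [u] := by
    intro l
    constructor
    · rintro ⟨hc, hh, m, hlast, hm⟩
      cases l with
      | nil => simp at hh
      | cons y t =>
        have : y = u := by simpa using hh
        subst this
        cases t with
        | nil => rfl
        | cons w s =>
          have hcov : y ⋖ w := (List.isChain_cons.mp hc).1 w rfl
          exact absurd (hu hcov.lt.le) (not_le_of_gt hcov.lt)
    · rintro rfl
      exact ⟨List.isChain_singleton u, rfl, u, rfl, hu⟩
  have : Unique {l : List α // UpChain u l} := by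
    refine ⟨⟨⟨[u], (huniq [u]).mpr rfl⟩⟩, ?_⟩
    rintro ⟨l, hl⟩
    exact Subtype.ext ((huniq l).mp hl)
  rw [uc, Nat.card_unique]

lemma uc_eq (u : α) :
    uc u = (if IsMax u then 1 else 0) + ∑ w : α, if u ⋖ w then uc w else 0 := by
  by_cases hu : IsMax u
  · rw [uc_max hu, if_pos hu]
    have : ∀ w : α, (if u ⋖ w then uc w else 0) = 0 := by
      intro w
      rw [if_neg]
      intro hc
      exact absurd (hu hc.lt.le) (not_le_of_gt hc.lt)
    simp [this]
  · rw [if_neg hu, zero_add]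
    haveI : ∀ w : α, Finite {l : List α // UpChain w l} := fun w => finite_upChain w
    let g : (Σ w : {w : α // u ⋖ w}, {l : List α // UpChain w.1 l}) → {l : List α // UpChain u l} :=
      fun x => ⟨u :: x.2.1, by
        obtain ⟨⟨w, hw⟩, ⟨l, hc, hh, m, hlast, hm⟩⟩ := x
        refine ⟨?_, rfl, m, ?_, hm⟩
        · refine List.isChain_cons.mpr ⟨?_, hc⟩
          intro y hy
          rw [hh] at hy
          have : y = w := by simpa using hy.symm
          subst this; exact hw
        · cases l with
          | nil => simp at hh
          | cons z s => rw [List.getLast?_cons_cons]; exact hlast⟩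
    have hinj : Function.Injective g := by
      rintro ⟨⟨w₁, hw₁⟩, ⟨l₁, hl₁⟩⟩ ⟨⟨w₂, hw₂⟩, ⟨l₂, hl₂⟩⟩ h
      have hl : u :: l₁ = u :: l₂ := congrArg Subtype.val h
      have hll : l₁ = l₂ := by simpa using hl
      subst hll
      have hw : w₁ = w₂ := by
        have h1 := hl₁.2.1
        have h2 := hl₂.2.1
        rw [h1] at h2
        simpa using h2
      subst hw
      rfl
    have hsurj : Function.Surjective g := by
      rintro ⟨l, hc, hh, m, hlast, hm⟩
      cases l with
      | nil => simp at hh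
      | cons y t =>
        have hy : y = u := by simpa using hh
        subst hy
        cases t with
        | nil =>
          have hmy : m = y := (by simpa using hlast : y = m).symm
          exact absurd (hmy ▸ hm : IsMax y) hu
        | cons w s =>
          have hcov : y ⋖ w := (List.isChain_cons.mp hc).1 w rfl
          refine ⟨⟨⟨w, hcov⟩, ⟨w :: s, (List.isChain_cons.mp hc).2, rfl, m, ?_, hm⟩⟩, rfl⟩
          rw [List.getLast?_cons_cons] at hlast
          exact hlast
    have hcard := Nat.card_congr (Equiv.ofBijective g ⟨hinj, hsurj⟩)
    rw [uc, ← hcard, nat_card_sigma]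
    exact sum_subtype_ite (fun w => uc w)

lemma uc_pos (v : α) : 1 ≤ uc v := by
  haveI := finite_upChain v
  have : Nonempty {l : List α // UpChain v l} := by
    obtain ⟨l, hl⟩ := exists_upChain v
    exact ⟨⟨l, hl⟩⟩
  exact Nat.card_pos

lemma two_le_indeg {w u₁ u₂ : α} (h1 : u₁ ⋖ w) (h2 : u₂ ⋖ w) (hne : u₁ ≠ u₂) :
    2 ≤ indeg w := by
  have hnt : Nontrivial {u : α // u ⋖ w} := ⟨⟨⟨u₁, h1⟩, ⟨u₂, h2⟩, by simpa using hne⟩⟩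
  haveI := Fintype.ofFinite {u : α // u ⋖ w}
  rw [indeg, Nat.card_eq_fintype_card]
  exact Fintype.one_lt_card_iff_nontrivial.mpr hnt

lemma of_two_le_indeg {w : α} (h : 2 ≤ indeg w) :
    ∃ a b, a < w ∧ b < w ∧ ¬ a ≤ b ∧ ¬ b ≤ a := by
  haveI := Fintype.ofFinite {u : α // u ⋖ w}
  rw [indeg, Nat.card_eq_fintype_card] at h
  obtain ⟨⟨a, ha⟩, ⟨b, hb⟩, hab⟩ := Fintype.one_lt_card_iff_nontrivial.mp h
  have hne : a ≠ b := fun h => hab (Subtype.ext h)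
  refine ⟨a, b, ha.lt, hb.lt, ?_, ?_⟩
  · intro hle
    exact ha.2 (lt_of_le_of_ne hle hne) hb.lt
  · intro hle
    exact hb.2 (lt_of_le_of_ne hle (Ne.symm hne)) ha.lt

lemma indeg_eq_zero_of_isMin {w : α} (h : IsMin w) : indeg w = 0 := by
  have : IsEmpty {u : α // u ⋖ w} := ⟨fun u => absurd (h u.2.lt.le) (not_le_of_gt u.2.lt)⟩
  rw [indeg]
  exact Nat.card_of_isEmpty

lemma one_le_indeg_of_not_isMin {w : α} (h : ¬ IsMin w) : 1 ≤ indeg w := by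
  obtain ⟨u, hu⟩ := not_isMin_iff.mp h
  obtain ⟨m, _, hmw⟩ := exists_le_covBy_of_lt hu
  have : Nonempty {u : α // u ⋖ w} := ⟨⟨m, hmw⟩⟩
  exact Nat.card_pos

lemma descend : ∀ c : α, (∃ a b, a < c ∧ b < c ∧ ¬ a ≤ b ∧ ¬ b ≤ a) →
    ∃ w, w ≤ c ∧ 2 ≤ indeg w := by
  have hwf : WellFounded ((· < ·) : α → α → Prop) := IsWellFounded.wf
  intro c
  induction c using hwf.induction with
  | _ c IH =>
    rintro ⟨a, b, hac, hbc, hab, hba⟩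
    obtain ⟨a', haa, hac'⟩ := exists_le_covBy_of_lt hac
    obtain ⟨b', hbb, hbc'⟩ := exists_le_covBy_of_lt hbc
    by_cases hne : a' = b'
    · subst hne
      have haa' : a < a' := lt_of_le_of_ne haa (by rintro rfl; exact hba hbb)
      have hbb' : b < a' := lt_of_le_of_ne hbb (by rintro rfl; exact hab haa)
      obtain ⟨w, hw, h2⟩ := IH a' hac'.lt ⟨a, b, haa', hbb', hab, hba⟩
      exact ⟨w, le_trans hw hac'.lt.le, h2⟩
    · exact ⟨c, le_refl c, two_le_indeg hac' hbc' hne⟩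

lemma indeg_eq_filter (w : α) : indeg w = (Finset.univ.filter (· ⋖ w)).card := by
  rw [indeg, Nat.card_eq_fintype_card, Fintype.card_subtype]

lemma numMax_eq : numMax α = ∑ v : α, if IsMax v then 1 else 0 := by
  rw [numMax, Nat.card_eq_fintype_card, Fintype.card_subtype, Finset.card_filter]

lemma numMin_eq : numMin α = ∑ v : α, if IsMin v then 1 else 0 := by
  rw [numMin, Nat.card_eq_fintype_card, Fintype.card_subtype, Finset.card_filter]

lemma numEdges_eq : numEdges α = ∑ w : α, indeg w := by
  have e : {p : α × α // p.1 ⋖ p.2} ≃ Σ w : α, {u : α // u ⋖ w} :=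
    { toFun := fun p => ⟨p.1.2, ⟨p.1.1, p.2⟩⟩
      invFun := fun x => ⟨(x.2.1, x.1), x.2.2⟩
      left_inv := by rintro ⟨⟨a, b⟩, h⟩; rfl
      right_inv := by rintro ⟨w, ⟨u, h⟩⟩; rfl }
  haveI : ∀ w : α, Finite {u : α // u ⋖ w} := fun w => Subtype.finite
  rw [numEdges, Nat.card_congr e, nat_card_sigma]
  rfl

lemma sum_uc : ∑ u : α, uc u = numMax α + ∑ w : α, indeg w * uc w := by
  calc ∑ u : α, uc u
      = ∑ u : α, ((if IsMax u then 1 else 0) + ∑ w : α, if u ⋖ w then uc w else 0) :=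
        Finset.sum_congr rfl (fun u _ => uc_eq u)
    _ = (∑ u : α, if IsMax u then 1 else 0) + ∑ u : α, ∑ w : α, (if u ⋖ w then uc w else 0) :=
        Finset.sum_add_distrib
    _ = numMax α + ∑ w : α, ∑ u : α, (if u ⋖ w then uc w else 0) := by
        rw [numMax_eq, Finset.sum_comm]
    _ = numMax α + ∑ w : α, indeg w * uc w := by
        congr 1
        refine Finset.sum_congr rfl (fun w _ => ?_)
        rw [← Finset.sum_filter, Finset.sum_const, smul_eq_mul, indeg_eq_filter]

lemma numMaxChains_eq :
    numMaxChains α = ∑ v : α, if IsMin v then uc v else 0 := by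
  haveI : ∀ v : α, Finite {l : List α // UpChain v l} := fun v => finite_upChain v
  let g : (Σ v : {v : α // IsMin v}, {l : List α // UpChain v.1 l}) →
      {l : List α // IsMaxChainList l} :=
    fun x => ⟨x.2.1, x.2.2.1, ⟨x.1.1, x.2.2.2.1, x.1.2⟩, x.2.2.2.2⟩
  have hinj : Function.Injective g := by
    rintro ⟨⟨v₁, h1⟩, ⟨l₁, hl₁⟩⟩ ⟨⟨v₂, h2⟩, ⟨l₂, hl₂⟩⟩ h
    have hl : l₁ = l₂ := congrArg Subtype.val h
    subst hl
    have hv : v₁ = v₂ := by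
      have h1' := hl₁.2.1
      have h2' := hl₂.2.1
      rw [h1'] at h2'
      simpa using h2'
    subst hv
    rfl
  have hsurj : Function.Surjective g := by
    rintro ⟨l, hc, ⟨m, hh, hmin⟩, hmax⟩
    exact ⟨⟨⟨m, hmin⟩, ⟨l, hc, hh, hmax⟩⟩, rfl⟩
  have hcard := Nat.card_congr (Equiv.ofBijective g ⟨hinj, hsurj⟩)
  rw [numMaxChains, ← hcard, nat_card_sigma]
  exact sum_subtype_ite (fun v => uc v)

lemma gap_eq_sum : gap α = ∑ w : α, (((uc w - 1) * (indeg w - 1) : ℕ) : ℤ) := by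
  have hterm : ∀ w : α, (((uc w - 1) * (indeg w - 1) : ℕ) : ℤ) =
      (indeg w : ℤ) * uc w - uc w - indeg w + 1
      + ((if IsMin w then (uc w : ℤ) else 0) - (if IsMin w then (1 : ℤ) else 0)) := by
    intro w
    by_cases hw : IsMin w
    · rw [indeg_eq_zero_of_isMin hw, if_pos hw, if_pos hw]
      simp
    · have h1 : 1 ≤ uc w := uc_pos w
      have h2 : 1 ≤ indeg w := one_le_indeg_of_not_isMin hw
      rw [if_neg hw, if_neg hw]
      push_cast [h1, h2]
      ring
  rw [Finset.sum_congr rfl (fun w (_ : w ∈ Finset.univ) => hterm w)]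
  have h2 : (∑ u : α, (uc u : ℤ)) = (numMax α : ℤ) + ∑ w : α, (indeg w : ℤ) * uc w := by
    have h := sum_uc (α := α)
    have := congrArg (fun n : ℕ => (n : ℤ)) h
    push_cast at this
    exact this
  have h3 : (numMaxChains α : ℤ) = ∑ w : α, (if IsMin w then (uc w : ℤ) else 0) := by
    have := congrArg (fun n : ℕ => (n : ℤ)) (numMaxChains_eq (α := α))
    push_cast at this
    exact this
  have h4 : (numMin α : ℤ) = ∑ w : α, (if IsMin w then (1 : ℤ) else 0) := by
    have := congrArg (fun n : ℕ => (n : ℤ)) (numMin_eq (α := α))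
    push_cast at this
    exact this
  have h5 : (numEdges α : ℤ) = ∑ w : α, (indeg w : ℤ) := by
    have := congrArg (fun n : ℕ => (n : ℤ)) (numEdges_eq (α := α))
    push_cast at this
    exact this
  have h6 : (Nat.card α : ℤ) = ∑ _w : α, (1 : ℤ) := by
    simp [Nat.card_eq_fintype_card]
  rw [gap, h3, h4, h5, h6]
  simp only [Finset.sum_add_distrib, Finset.sum_sub_distrib]
  linarith [h2]

lemma hasX_iff : HasX α ↔ ∃ w : α, 2 ≤ uc w ∧ 2 ≤ indeg w := by
  constructor
  · rintro ⟨c, a, b, d, e, hac, hbc, hcd, hce, hab, hba, hde, hed⟩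
    obtain ⟨w, hwc, h2⟩ := descend c ⟨a, b, hac, hbc, hab, hba⟩
    refine ⟨w, ?_, h2⟩
    exact two_le_uc (le_trans hwc hcd.le) (le_trans hwc hce.le) hde hed
  · rintro ⟨w, h2u, h2i⟩
    obtain ⟨a, b, haw, hbw, hab, hba⟩ := of_two_le_indeg h2i
    obtain ⟨d, e, hwd, hwe, hde, hed⟩ := diverge h2u
    exact ⟨w, a, b, d, e, haw, hbw, hwd, hwe, hab, hba, hde, hed⟩

end GapAux

theorem gap_nonneg_and_zero_iff_X_avoiding (α : Type*) [Fintype α] [PartialOrder α] :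
    0 ≤ gap α ∧ (gap α = 0 ↔ ¬ HasX α) := by
  have hsum := gap_eq_sum (α := α)
  constructor
  · rw [hsum]
    positivity
  · rw [hsum, ← Nat.cast_sum, Nat.cast_eq_zero, Finset.sum_eq_zero_iff]
    constructor
    · intro h hX
      obtain ⟨w, h2u, h2i⟩ := hasX_iff.mp hX
      have := h w (Finset.mem_univ w)
      rcases Nat.mul_eq_zero.mp this with h0 | h0 <;> omega
    · intro hnX w _
      by_contra h0
      rcases Nat.mul_eq_zero.not.mp h0 with h
      push_neg at h
      exact hnX (hasX_iff.mpr ⟨w, by omega, by omega⟩)
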